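/- Let α be a real number. Then the following two conditions hold simultaneously — (i) α > 0, and (ii) for every real t and every complex number w satisfying (1 − α·i·t)·w² + (−1 + (2α−3/2)·i·t)·w + (1/2 − α)·i·t = 0 one has |w| ≤ 1 — if and only if α ≥ 1/2. (This is the statement that the generalized AM2 method is A-stable if and only if α ≥ 1/2.) -/

import Mathlib

private lemma quad_root_aux (a b c r : ℂ) (ha : a ≠ 0) (hr : r^2 = b^2 - 4*a*c) :
    a * ((-b+r)/(2*a))^2 + b * ((-b+r)/(2*a)) + c = 0 := by
  field_simp
  linear_combination hr

private lemma quad_vieta_sum (a b r : ℂ) (ha : a ≠ 0) :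
    b = -a * (((-b+r)/(2*a)) + ((-b-r)/(2*a))) := by
  field_simp
  ring

private lemma quad_vieta_prod (a b c r : ℂ) (ha : a ≠ 0) (hr : r^2 = b^2 - 4*a*c) :
    c = a * (((-b+r)/(2*a)) * ((-b-r)/(2*a))) := by
  field_simp
  linear_combination hr

set_option maxHeartbeats 1000000 in
private lemma am2_root_le_one (α t : ℝ) (w : ℂ) (hα : α ≥ 1/2)
    (h : (1 - (α : ℂ) * Complex.I * (t : ℂ)) * w ^ 2
          + (-1 + (2 * (α : ℂ) - 3/2) * Complex.I * (t : ℂ)) * w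
          + (1/2 - (α : ℂ)) * Complex.I * (t : ℂ) = 0) :
    ‖w‖ ≤ 1 := by
  set Q : ℂ := (α:ℂ) * w^2 + ((3/2 - 2*α : ℝ):ℂ) * w + ((α - 1/2 : ℝ):ℂ) with hQ
  have hz : w^2 - w = Complex.I * (t:ℂ) * Q := by
    rw [hQ]; push_cast; linear_combination h
  have hre : ((w^2 - w) * (starRingEnd ℂ) Q).re = 0 := by
    rw [hz]
    have : Complex.I * (t:ℂ) * Q * (starRingEnd ℂ) Q = Complex.I * (t:ℂ) * (Complex.normSq Q : ℂ) := by
      rw [mul_assoc, Complex.mul_conj]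
    rw [this]
    simp [Complex.mul_re]
  set x := w.re with hx
  set y := w.im with hy
  have hcQ : (starRingEnd ℂ) Q = (α:ℂ) * ((starRingEnd ℂ) w)^2 + ((3/2 - 2*α : ℝ):ℂ) * (starRingEnd ℂ) w + ((α - 1/2 : ℝ):ℂ) := by
    rw [hQ]; simp [map_add, map_mul, map_pow, map_sub, map_div₀, map_ofNat, map_inv₀, map_one, Complex.conj_ofReal]
  have hE : ((w^2 - w) * (starRingEnd ℂ) Q).re =
      -α*((x^2+y^2)*x - (x^2+y^2)^2) + (2*α-3/2)*((x^2+y^2) - (x^2+y^2)*x) + (1/2-α)*(x - x^2 + y^2) := by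
    rw [hcQ]
    simp [Complex.mul_re, Complex.mul_im, Complex.add_re, Complex.add_im, pow_two]
    ring
  rw [hE] at hre
  have hs : ‖w‖ ^ 2 = x^2 + y^2 := by
    rw [Complex.sq_norm, Complex.normSq_apply]; ring
  by_contra hcon
  push_neg at hcon
  have hgt : x^2 + y^2 > 1 := by nlinarith [norm_nonneg w]
  have h1 : x^2 + y^2 + 1 - 2*x ≥ 0 := by nlinarith [sq_nonneg (x-1), sq_nonneg y]
  have h2 : x^2 + y^2 - x ≥ 0 := by nlinarith [sq_nonneg (x-1), sq_nonneg y]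
  have h3 : (α - 1/2) * ((x^2+y^2-x) * (x^2+y^2+1-2*x)) ≥ 0 :=
    mul_nonneg (by linarith) (mul_nonneg h2 h1)
  nlinarith [hre, h3, hgt]

set_option maxHeartbeats 1000000 in
private lemma am2_necessary (α : ℝ) (h0 : 0 < α)
    (hall : ∀ t : ℝ, ∀ w : ℂ,
        (1 - (α : ℂ) * Complex.I * (t : ℂ)) * w ^ 2
          + (-1 + (2 * (α : ℂ) - 3/2) * Complex.I * (t : ℂ)) * w
          + (1/2 - (α : ℂ)) * Complex.I * (t : ℂ) = 0 →
        ‖w‖ ≤ 1) : α ≥ 1/2 := by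
  set a : ℂ := 1 - (α:ℂ) * Complex.I with ha_def
  set b : ℂ := -1 + (2 * (α:ℂ) - 3/2) * Complex.I with hb_def
  set c : ℂ := (1/2 - (α:ℂ)) * Complex.I with hc_def
  have ha : a ≠ 0 := by
    intro h
    have := congrArg Complex.re h
    simp [ha_def, Complex.sub_re, Complex.mul_re] at this
  obtain ⟨r, hr⟩ : ∃ r : ℂ, r^2 = b^2 - 4*a*c :=
    IsAlgClosed.exists_pow_nat_eq (b^2 - 4*a*c) (n := 2) (by norm_num)
  have hr' : (-r)^2 = b^2 - 4*a*c := by rw [neg_pow]; simpa using hr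
  set w₁ : ℂ := (-b + r) / (2*a) with hw1_def
  set w₂ : ℂ := (-b - r) / (2*a) with hw2_def
  have hroot : ∀ w : ℂ, a * w^2 + b * w + c = 0 → ‖w‖ ≤ 1 := by
    intro w hw
    apply hall 1 w
    push_cast
    rw [ha_def, hb_def, hc_def] at hw
    linear_combination hw
  have h₁ : ‖w₁‖ ≤ 1 := hroot w₁ (quad_root_aux a b c r ha hr)
  have h₂ : ‖w₂‖ ≤ 1 := by
    apply hroot
    have := quad_root_aux a b c (-r) ha hr'
    rw [hw2_def]
    convert this using 4 <;> ring
  have hb : b = -a * (w₁ + w₂) := quad_vieta_sum a b r ha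
  have hc : c = a * (w₁ * w₂) := quad_vieta_prod a b c r ha hr
  set s₁ : ℝ := Complex.normSq w₁ with hs1
  set s₂ : ℝ := Complex.normSq w₂ with hs2
  set m₁ : ℝ := ‖w₁‖ with hm1
  set m₂ : ℝ := ‖w₂‖ with hm2
  have hm₁0 : 0 ≤ m₁ := norm_nonneg w₁
  have hm₂0 : 0 ≤ m₂ := norm_nonneg w₂
  have hms₁ : m₁^2 = s₁ := Complex.sq_norm w₁
  have hms₂ : m₂^2 = s₂ := Complex.sq_norm w₂
  set N : ℝ := Complex.normSq a with hN
  have hN0 : 0 < N := by rw [hN]; exact Complex.normSq_pos.2 ha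
  have hA : a * (starRingEnd ℂ) a = (N:ℂ) := Complex.mul_conj a
  have hW₁ : w₁ * (starRingEnd ℂ) w₁ = (s₁:ℂ) := Complex.mul_conj w₁
  have hW₂ : w₂ * (starRingEnd ℂ) w₂ = (s₂:ℂ) := Complex.mul_conj w₂
  have hkey : (starRingEnd ℂ) a * b - c * (starRingEnd ℂ) b
      = (N:ℂ) * (((s₁:ℝ):ℂ) * w₂ + ((s₂:ℝ):ℂ) * w₁ - w₁ - w₂) := by
    rw [hb, hc]
    simp only [map_mul, map_add, map_neg]
    linear_combination (-(w₁+w₂) + w₁*w₂*((starRingEnd ℂ) w₁) + w₁*w₂*((starRingEnd ℂ) w₂)) * hA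
      + (N:ℂ) * w₂ * hW₁ + (N:ℂ) * w₁ * hW₂
  have hbound : ‖(starRingEnd ℂ) a * b - c * (starRingEnd ℂ) b‖ ≤ N - Complex.normSq c := by
    rw [hkey]
    have hCc : Complex.normSq c = N * (s₁ * s₂) := by
      rw [hc, Complex.normSq_mul, Complex.normSq_mul]
    rw [hCc, norm_mul]
    have hNabs : ‖(N:ℂ)‖ = N := by
      rw [Complex.norm_real, Real.norm_eq_abs, abs_of_pos hN0]
    rw [hNabs]
    have htr : ‖((s₁:ℝ):ℂ) * w₂ + ((s₂:ℝ):ℂ) * w₁ - w₁ - w₂‖ ≤ 1 - s₁ * s₂ := by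
      have e : ((s₁:ℝ):ℂ) * w₂ + ((s₂:ℝ):ℂ) * w₁ - w₁ - w₂
          = (((s₁ - 1 : ℝ)):ℂ) * w₂ + (((s₂ - 1 : ℝ)):ℂ) * w₁ := by push_cast; ring
      rw [e]
      have step1 : ‖(((s₁ - 1:ℝ)):ℂ) * w₂ + (((s₂ - 1:ℝ)):ℂ) * w₁‖
          ≤ |s₁ - 1| * m₂ + |s₂ - 1| * m₁ := by
        calc ‖(((s₁ - 1:ℝ)):ℂ) * w₂ + (((s₂ - 1:ℝ)):ℂ) * w₁‖
            ≤ ‖(((s₁ - 1:ℝ)):ℂ) * w₂‖ + ‖(((s₂ - 1:ℝ)):ℂ) * w₁‖ :=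
              norm_add_le _ _
          _ = |s₁ - 1| * m₂ + |s₂ - 1| * m₁ := by
              rw [norm_mul, norm_mul, Complex.norm_real, Complex.norm_real, Real.norm_eq_abs, Real.norm_eq_abs]
      have habs1 : |s₁ - 1| = 1 - s₁ := by
        rw [abs_of_nonpos (by nlinarith)]; ring
      have habs2 : |s₂ - 1| = 1 - s₂ := by
        rw [abs_of_nonpos (by nlinarith)]; ring
      rw [habs1, habs2] at step1
      -- (1-m₁²)m₂ + (1-m₂²)m₁ ≤ 1 - m₁²m₂² since (1-m₁m₂)(1-m₁)(1-m₂) ≥ 0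
      have hmm : (1 - m₁*m₂) * ((1-m₁)*(1-m₂)) ≥ 0 := by
        apply mul_nonneg
        · nlinarith
        · nlinarith
      nlinarith [step1, hmm]
    calc N * ‖((s₁:ℝ):ℂ) * w₂ + ((s₂:ℝ):ℂ) * w₁ - w₁ - w₂‖
        ≤ N * (1 - s₁ * s₂) := mul_le_mul_of_nonneg_left htr (le_of_lt hN0)
      _ = N - N * (s₁ * s₂) := by ring
  have hLval : (starRingEnd ℂ) a * b - c * (starRingEnd ℂ) b
      = ((-(α + 1/4) : ℝ):ℂ) + ((-1 : ℝ):ℂ) * Complex.I := by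
    rw [ha_def, hb_def, hc_def]
    simp only [map_sub, map_add, map_mul, map_one, map_neg, map_ofNat, map_div₀,
      Complex.conj_ofReal, Complex.conj_I]
    push_cast
    linear_combination (2*α - 1/2 - (2*α - 3/2)*(1/2 - (α:ℂ)) - α*(2*α-3/2) - 1) * Complex.I_sq
  have hNval : N = 1 + α^2 := by
    rw [hN, ha_def]
    simp [Complex.normSq_apply, Complex.sub_re, Complex.sub_im, Complex.mul_re, Complex.mul_im]
    ring
  have hCval : Complex.normSq c = (1/2 - α)^2 := by
    rw [hc_def]
    simp [Complex.normSq_apply, Complex.mul_re, Complex.mul_im, Complex.sub_re, Complex.sub_im]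
    ring
  have hLnorm : Complex.normSq ((starRingEnd ℂ) a * b - c * (starRingEnd ℂ) b) = (α + 1/4)^2 + 1 := by
    rw [hLval]
    simp [Complex.normSq_apply, Complex.add_re, Complex.add_im, Complex.mul_re, Complex.mul_im]
    ring
  have habs2 : Complex.normSq ((starRingEnd ℂ) a * b - c * (starRingEnd ℂ) b)
      ≤ (N - Complex.normSq c)^2 := by
    have h1 := Complex.sq_norm ((starRingEnd ℂ) a * b - c * (starRingEnd ℂ) b)
    nlinarith [norm_nonneg ((starRingEnd ℂ) a * b - c * (starRingEnd ℂ) b), hbound]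
  rw [hLnorm, hNval, hCval] at habs2
  nlinarith [habs2]

/-- A-stability of the generalized AM2 method: the leading coefficient α is positive and
all roots of the characteristic polynomial η(it, w) lie in the closed unit disc for all
real t, if and only if α ≥ 1/2. -/
theorem generalized_AM2_A_stable_iff (α : ℝ) :
    (0 < α ∧
      ∀ t : ℝ, ∀ w : ℂ,
        (1 - (α : ℂ) * Complex.I * (t : ℂ)) * w ^ 2
          + (-1 + (2 * (α : ℂ) - 3/2) * Complex.I * (t : ℂ)) * w
          + (1/2 - (α : ℂ)) * Complex.I * (t : ℂ) = 0 →
        ‖w‖ ≤ 1)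
    ↔ α ≥ 1/2 := by
  constructor
  · rintro ⟨h0, hall⟩
    exact am2_necessary α h0 hall
  · intro hα
    exact ⟨by linarith, fun t w h => am2_root_le_one α t w hα h⟩
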